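/- arXiv:2605.19415 — 5 statements merged into one kernel-verified Lean document; each statement's English description precedes it below -/
import Mathlib

section
/- Let d ≥ 3 and let Ω be a nonempty bounded open subset of ℝ^d. Let a, b ∈ ℝ^d, λ ∈ ℝ, and let A : ℝ^d → ℝ^d be a linear map that is skew-symmetric (⟨A x, y⟩ = −⟨x, A y⟩ for all x, y). Define the conformal Killing field φ : ℝ^d → ℝ^d by φ(x) = a + λ x + A x + 2⟨b, x⟩ x − ‖x‖² b. If φ(x) = 0 for every x in the frontier (topological boundary) of Ω, then φ(x) = 0 for every x ∈ ℝ^d. -/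
open Filter Metric

lemma ray_hits_frontier {E : Type*} [NormedAddCommGroup E] [NormedSpace ℝ E]
    {Ω : Set E} (hopen : IsOpen Ω) (hbdd : Bornology.IsBounded Ω)
    {x₀ : E} (hx₀ : x₀ ∈ Ω) {u : E} (hu : u ≠ 0) :
    ∃ t : ℝ, 0 < t ∧ x₀ + t • u ∈ frontier Ω := by
  set S : Set ℝ := {t : ℝ | 0 ≤ t ∧ x₀ + t • u ∉ Ω} with hS
  have hcont : Continuous fun t : ℝ => x₀ + t • u := by continuity
  obtain ⟨R, hR⟩ := hbdd.subset_closedBall 0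
  have hSne : S.Nonempty := by
    refine ⟨(|R| + ‖x₀‖ + 1) / ‖u‖, ?_, ?_⟩
    · positivity
    · intro hmem
      have h1 : ‖x₀ + ((|R| + ‖x₀‖ + 1) / ‖u‖) • u‖ ≤ R := by
        simpa using mem_closedBall_zero_iff.mp (hR hmem)
      set c : ℝ := (|R| + ‖x₀‖ + 1) / ‖u‖ with hc
      have hc0 : 0 ≤ c := by positivity
      have h2 : c * ‖u‖ = |R| + ‖x₀‖ + 1 :=
        div_mul_cancel₀ _ (norm_ne_zero_iff.mpr hu)
      have h3 : ‖(x₀ + c • u) - x₀‖ ≤ ‖x₀ + c • u‖ + ‖x₀‖ := norm_sub_le _ _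
      have h4 : ‖(x₀ + c • u) - x₀‖ = c * ‖u‖ := by
        rw [add_sub_cancel_left, norm_smul, Real.norm_eq_abs, abs_of_nonneg hc0]
      nlinarith [abs_nonneg R, le_abs_self R, norm_nonneg x₀]
  have hSclosed : IsClosed S := by
    have : S = Set.Ici (0:ℝ) ∩ (fun t : ℝ => x₀ + t • u) ⁻¹' Ωᶜ := by
      ext t; simp [hS, Set.mem_Ici, and_comm]
    rw [this]
    exact isClosed_Ici.inter (hopen.isClosed_compl.preimage hcont)
  have hSbdd : BddBelow S := ⟨0, fun t ht => ht.1⟩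
  set T := sInf S with hT
  have hTS : T ∈ S := hSclosed.csInf_mem hSne hSbdd
  have hT0 : 0 < T := by
    rcases lt_or_eq_of_le hTS.1 with h | h
    · exact h
    · exfalso; apply hTS.2; rw [← h]; simpa using hx₀
  refine ⟨T, hT0, ?_⟩
  rw [hopen.frontier_eq]
  refine ⟨?_, hTS.2⟩
  have htends : Tendsto (fun t : ℝ => x₀ + t • u) (nhdsWithin T (Set.Iio T)) (nhds (x₀ + T • u)) :=
    (hcont.tendsto T).mono_left nhdsWithin_le_nhds
  refine mem_closure_of_tendsto htends ?_
  filter_upwards [Ioo_mem_nhdsLT_of_mem (Set.mem_Ioc.mpr ⟨hT0, le_refl T⟩)] with t ht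
  by_contra hnot
  have : t ∈ S := ⟨le_of_lt ht.1, hnot⟩
  exact absurd (csInf_le hSbdd this) (not_le.mpr ht.2)

/-- **Rigidity of conformal Killing fields.**
If a conformal Killing field
`φ x = a + λ • x + A x + (2⟪b, x⟫ • x - ‖x‖² • b)` (with `A` skew-symmetric)
vanishes on the boundary of a nonempty bounded open set `Ω ⊆ ℝᵈ`, `d ≥ 3`,
then `φ` vanishes identically. -/
theorem conformal_killing_rigidity
    (d : ℕ) (hd : 3 ≤ d)
    (Ω : Set (EuclideanSpace ℝ (Fin d)))
    (hΩne : Ω.Nonempty) (hΩopen : IsOpen Ω) (hΩbdd : Bornology.IsBounded Ω)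
    (a b : EuclideanSpace ℝ (Fin d)) (lam : ℝ)
    (A : EuclideanSpace ℝ (Fin d) →ₗ[ℝ] EuclideanSpace ℝ (Fin d))
    (hA : ∀ x y : EuclideanSpace ℝ (Fin d), (inner ℝ (A x) y : ℝ) = -(inner ℝ x (A y) : ℝ))
    (φ : EuclideanSpace ℝ (Fin d) → EuclideanSpace ℝ (Fin d))
    (hφ : ∀ x, φ x =
      a + lam • x + A x + ((2 * (inner ℝ b x : ℝ)) • x - (‖x‖ ^ 2) • b))
    (hbdry : ∀ x ∈ frontier Ω, φ x = 0) :
    ∀ x, φ x = 0 := by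
  have hAuu : ∀ u : EuclideanSpace ℝ (Fin d), (inner ℝ (A u) u : ℝ) = 0 := by
    intro u
    have h1 := hA u u
    have h2 : (inner ℝ u (A u) : ℝ) = inner ℝ (A u) u := real_inner_comm _ _
    linarith
  -- Key: for any point of Ω and any unit u ⊥ b, the conformal factor vanishes.
  have key : ∀ x₀ ∈ Ω, ∀ u : EuclideanSpace ℝ (Fin d),
      ‖u‖ = 1 → (inner ℝ b u : ℝ) = 0 → lam + 2 * (inner ℝ b x₀ : ℝ) = 0 := by
    intro x₀ hx₀ u hu hbu
    have hu0 : u ≠ 0 := by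
      intro h; rw [h, norm_zero] at hu; norm_num at hu
    have huu : (inner ℝ u u : ℝ) = 1 := by
      rw [real_inner_self_eq_norm_sq, hu]; norm_num
    have expand : ∀ r : ℝ, (inner ℝ (φ (x₀ + r • u)) u : ℝ)
        = inner ℝ (φ x₀) u + (lam + 2 * (inner ℝ b x₀ : ℝ)) * r := by
      intro r
      rw [hφ, hφ]
      simp only [inner_add_left, inner_sub_left, real_inner_smul_left,
        map_add, map_smul, inner_add_right, real_inner_smul_right, hbu, hAuu, huu]
      ring
    obtain ⟨t, ht, hzt⟩ := ray_hits_frontier hΩopen hΩbdd hx₀ hu0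
    obtain ⟨s, hs, hzs⟩ := ray_hits_frontier hΩopen hΩbdd hx₀ (neg_ne_zero.mpr hu0)
    have hzs' : x₀ + (-s) • u ∈ frontier Ω := by
      rwa [neg_smul, ← smul_neg]
    have e1 : (inner ℝ (φ x₀) u : ℝ) + (lam + 2 * (inner ℝ b x₀ : ℝ)) * t = 0 := by
      rw [← expand t, hbdry _ hzt, inner_zero_left]
    have e2 : (inner ℝ (φ x₀) u : ℝ) + (lam + 2 * (inner ℝ b x₀ : ℝ)) * (-s) = 0 := by
      rw [← expand (-s), hbdry _ hzs', inner_zero_left]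
    have : (lam + 2 * (inner ℝ b x₀ : ℝ)) * (t + s) = 0 := by linarith
    rcases mul_eq_zero.mp this with h | h
    · exact h
    · linarith
  -- a unit vector orthogonal to b
  have hd2 : (2:ℕ) ≤ d := by omega
  set i0 : Fin d := ⟨0, by omega⟩ with hi0
  set i1 : Fin d := ⟨1, by omega⟩ with hi1
  have hi01 : i1 ≠ i0 := by
    simp [hi0, hi1, Fin.ext_iff]
  obtain ⟨u₀, hu₀, hbu₀⟩ : ∃ u : EuclideanSpace ℝ (Fin d),
      ‖u‖ = 1 ∧ (inner ℝ b u : ℝ) = 0 := by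
    by_cases hb0 : b i0 = 0
    · refine ⟨EuclideanSpace.single i0 (1:ℝ), by simp, ?_⟩
      rw [EuclideanSpace.inner_single_right]
      simp [hb0]
    · set v : EuclideanSpace ℝ (Fin d) :=
        (b i1) • EuclideanSpace.single i0 (1:ℝ) - (b i0) • EuclideanSpace.single i1 (1:ℝ) with hv
      have hvne : v ≠ 0 := by
        intro h
        have : v i1 = 0 := by rw [h]; rfl
        rw [hv] at this
        simp [PiLp.sub_apply, PiLp.smul_apply, EuclideanSpace.single_apply, hi01] at this
        exact hb0 this
      have hbv : (inner ℝ b v : ℝ) = 0 := by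
        rw [hv, inner_sub_right, real_inner_smul_right, real_inner_smul_right,
          EuclideanSpace.inner_single_right, EuclideanSpace.inner_single_right]
        simp; ring
      refine ⟨‖v‖⁻¹ • v, norm_smul_inv_norm hvne, ?_⟩
      rw [real_inner_smul_right, hbv, mul_zero]
  obtain ⟨x₀, hx₀⟩ := hΩne
  -- b = 0
  have hb : b = 0 := by
    by_contra hb
    obtain ⟨ε, hε, hball⟩ := Metric.isOpen_iff.mp hΩopen x₀ hx₀
    have hbnorm : (0:ℝ) < ‖b‖ := norm_pos_iff.mpr hb
    set x₁ : EuclideanSpace ℝ (Fin d) := x₀ + (ε / (2 * ‖b‖)) • b with hx1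
    have hx₁Ω : x₁ ∈ Ω := by
      apply hball
      rw [Metric.mem_ball, hx1, dist_eq_norm, add_sub_cancel_left, norm_smul,
        Real.norm_eq_abs, abs_of_nonneg (by positivity)]
      have h5 : ε / (2 * ‖b‖) * ‖b‖ = ε / 2 := by
        field_simp
      rw [h5]; linarith
    have k0 := key x₀ hx₀ u₀ hu₀ hbu₀
    have k1 := key x₁ hx₁Ω u₀ hu₀ hbu₀
    rw [hx1, inner_add_right, real_inner_smul_right, real_inner_self_eq_norm_sq] at k1
    have hpos : ε / (2 * ‖b‖) * ‖b‖ ^ 2 > 0 := by positivity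
    nlinarith
  have hlam : lam = 0 := by
    have := key x₀ hx₀ u₀ hu₀ hbu₀
    rw [hb] at this
    simpa using this
  -- now φ is affine
  have hφ' : ∀ x, φ x = a + A x := by
    intro x
    rw [hφ, hb, hlam]
    simp
  -- A = 0
  have hA0 : ∀ v : EuclideanSpace ℝ (Fin d), A v = 0 := by
    intro v
    by_cases hv : v = 0
    · rw [hv, map_zero]
    · set u : EuclideanSpace ℝ (Fin d) := ‖v‖⁻¹ • v with hu
      have hu1 : ‖u‖ = 1 := norm_smul_inv_norm hv
      have hu0 : u ≠ 0 := by
        intro h; rw [h, norm_zero] at hu1; norm_num at hu1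
      obtain ⟨t, ht, hzt⟩ := ray_hits_frontier hΩopen hΩbdd hx₀ hu0
      obtain ⟨s, hs, hzs⟩ := ray_hits_frontier hΩopen hΩbdd hx₀ (neg_ne_zero.mpr hu0)
      have hzs' : x₀ + (-s) • u ∈ frontier Ω := by rwa [neg_smul, ← smul_neg]
      have e1 : a + A x₀ + t • A u = 0 := by
        have h := hbdry _ hzt
        rw [hφ', map_add, map_smul, ← add_assoc] at h
        exact h
      have e2 : a + A x₀ + (-s) • A u = 0 := by
        have h := hbdry _ hzs'
        rw [hφ', map_add, map_smul, ← add_assoc] at h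
        exact h
      have h3 : (t + s) • A u = 0 := by
        have h := sub_eq_zero.mpr (e1.trans e2.symm)
        calc (t + s) • A u
            = (a + A x₀ + t • A u) - (a + A x₀ + (-s) • A u) := by module
          _ = 0 := h
      have hAu : A u = 0 := by
        have hts : t + s ≠ 0 := by linarith
        exact (smul_eq_zero.mp h3).resolve_left hts
      have : A v = ‖v‖ • A u := by
        rw [hu, map_smul, smul_smul, mul_inv_cancel₀ (norm_ne_zero_iff.mpr hv), one_smul]
      rw [this, hAu, smul_zero]
  -- a = 0
  have ha : a = 0 := by
    have hsne : (EuclideanSpace.single i0 (1:ℝ)) ≠ 0 := by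
      intro h
      have := congrArg norm h
      simp at this
    obtain ⟨t, ht, hzt⟩ := ray_hits_frontier hΩopen hΩbdd hx₀ hsne
    have := hbdry _ hzt
    rw [hφ', hA0] at this
    simpa using this
  intro x
  rw [hφ, ha, hb, hlam, hA0]
  simp
end

section
/- Let d ≥ 1, let a, b ∈ ℝ^d, λ ∈ ℝ, and let A : ℝ^d → ℝ^d be a linear map that is skew-symmetric (⟨A x, y⟩ = −⟨x, A y⟩ for all x, y). Define φ : ℝ^d → ℝ^d by φ(x) = a + λ x + A x + 2⟨b, x⟩ x − ‖x‖² b. Then for every x ∈ ℝ^d the (Fréchet) derivative J = Dφ(x) has vanishing symmetric trace-free part: (1/2)(J + Jᵀ) − ((tr J)/d)·I = 0, where Jᵀ denotes the adjoint of J with respect to the Euclidean inner product, tr J its trace, and I the identity map. -/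
open scoped RealInnerProductSpace

lemma trace_eq_sum_inner' {ι : Type*} [Fintype ι] [DecidableEq ι]
    {E : Type*} [NormedAddCommGroup E] [InnerProductSpace ℝ E] [FiniteDimensional ℝ E]
    (e : OrthonormalBasis ι ℝ E) (f : E →ₗ[ℝ] E) :
    LinearMap.trace ℝ E f = ∑ i, ⟪e i, f (e i)⟫ := by
  rw [LinearMap.trace_eq_matrix_trace ℝ e.toBasis, Matrix.trace]
  simp [Matrix.diag, LinearMap.toMatrix_apply, OrthonormalBasis.coe_toBasis,
    OrthonormalBasis.coe_toBasis_repr_apply, OrthonormalBasis.repr_apply_apply]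

/-- **Conformal Killing fields lie in the kernel of `stf ∇`.**
For `φ x = a + λ • x + A x + (2⟪b, x⟫ • x - ‖x‖² • b)` with `A` skew-symmetric,
the Fréchet derivative `J = Dφ(x)` satisfies
`(1/2)(J + Jᵀ) - ((tr J)/d) • I = 0` at every point. -/
theorem conformal_killing_stf_grad_eq_zero
    (d : ℕ) (hd : 1 ≤ d)
    (a b : EuclideanSpace ℝ (Fin d)) (lam : ℝ)
    (A : EuclideanSpace ℝ (Fin d) →ₗ[ℝ] EuclideanSpace ℝ (Fin d))
    (hA : ∀ x y : EuclideanSpace ℝ (Fin d), (inner ℝ (A x) y : ℝ) = -(inner ℝ x (A y) : ℝ))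
    (φ : EuclideanSpace ℝ (Fin d) → EuclideanSpace ℝ (Fin d))
    (hφ : ∀ x, φ x =
      a + lam • x + A x + ((2 * (inner ℝ b x : ℝ)) • x - (‖x‖ ^ 2) • b)) :
    ∀ x : EuclideanSpace ℝ (Fin d),
      (1 / 2 : ℝ) • (fderiv ℝ φ x + ContinuousLinearMap.adjoint (fderiv ℝ φ x))
        - ((LinearMap.trace ℝ (EuclideanSpace ℝ (Fin d))
              ((fderiv ℝ φ x : EuclideanSpace ℝ (Fin d) →L[ℝ] EuclideanSpace ℝ (Fin d))
                : EuclideanSpace ℝ (Fin d) →ₗ[ℝ] EuclideanSpace ℝ (Fin d))) / (d : ℝ)) •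
            ContinuousLinearMap.id ℝ (EuclideanSpace ℝ (Fin d)) = 0 := by
  intro x
  obtain rfl : φ = fun y => a + lam • y + A y + ((2 * (inner ℝ b y : ℝ)) • y - (‖y‖ ^ 2) • b) :=
    funext hφ
  have hsq : HasFDerivAt (fun y : EuclideanSpace ℝ (Fin d) => (‖y‖ ^ 2 : ℝ))
      ((fderivInnerCLM ℝ (x, x)).comp
        ((ContinuousLinearMap.id ℝ _).prod (ContinuousLinearMap.id ℝ _))) x := by
    have h := (hasFDerivAt_id (𝕜 := ℝ) x).inner ℝ (hasFDerivAt_id x)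
    simpa only [real_inner_self_eq_norm_sq, id_eq] using h
  have H : HasFDerivAt (fun y : EuclideanSpace ℝ (Fin d) =>
      a + lam • y + A y + ((2 * (inner ℝ b y : ℝ)) • y - (‖y‖ ^ 2) • b)) _ x :=
    (((hasFDerivAt_const a x).add ((hasFDerivAt_id x).const_smul lam)).add
        (A.toContinuousLinearMap.hasFDerivAt)).add
      ((((innerSL ℝ b).hasFDerivAt.const_mul (2:ℝ)).smul (hasFDerivAt_id x)).sub
        (hsq.smul_const b))
  set J := fderiv ℝ (fun y : EuclideanSpace ℝ (Fin d) =>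
      a + lam • y + A y + ((2 * (inner ℝ b y : ℝ)) • y - (‖y‖ ^ 2) • b)) x with hJdef
  have hDv : ∀ v, J v = lam • v + A v + (2 * ⟪b, v⟫) • x + (2 * ⟪b, x⟫) • v
      - (2 * ⟪x, v⟫) • b := by
    intro v
    rw [hJdef, H.fderiv]
    simp only [ContinuousLinearMap.add_apply, ContinuousLinearMap.sub_apply,
      ContinuousLinearMap.smul_apply, ContinuousLinearMap.coe_smul', Pi.smul_apply,
      ContinuousLinearMap.coe_id', id_eq, ContinuousLinearMap.zero_apply,
      ContinuousLinearMap.smulRight_apply, ContinuousLinearMap.comp_apply,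
      ContinuousLinearMap.prod_apply, fderivInnerCLM_apply, innerSL_apply_apply,
      LinearMap.coe_toContinuousLinearMap', smul_eq_mul]
    rw [real_inner_comm v x]
    module
  have hA0 : ∀ v, ⟪v, A v⟫ = 0 := by
    intro v
    have h := hA v v
    rw [real_inner_comm] at h
    linarith
  have key : ContinuousLinearMap.adjoint J
      = (2 * lam + 4 * ⟪b, x⟫) • ContinuousLinearMap.id ℝ (EuclideanSpace ℝ (Fin d)) - J := by
    refine ((ContinuousLinearMap.eq_adjoint_iff _ J).mpr ?_).symm
    intro u v
    simp only [ContinuousLinearMap.sub_apply, ContinuousLinearMap.smul_apply,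
      ContinuousLinearMap.coe_id', id_eq, hDv, inner_sub_left, inner_sub_right,
      inner_add_left, inner_add_right, real_inner_smul_left, real_inner_smul_right]
    rw [real_inner_comm u x, real_inner_comm u b]
    linarith [hA u v, real_inner_comm (A u) v, real_inner_comm u (A v)]
  have hsum : J + ContinuousLinearMap.adjoint J
      = (2 * lam + 4 * ⟪b, x⟫) • ContinuousLinearMap.id ℝ (EuclideanSpace ℝ (Fin d)) := by
    rw [key]; abel
  have htr : LinearMap.trace ℝ (EuclideanSpace ℝ (Fin d))
      (J : EuclideanSpace ℝ (Fin d) →ₗ[ℝ] EuclideanSpace ℝ (Fin d))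
      = d * (lam + 2 * ⟪b, x⟫) := by
    rw [trace_eq_sum_inner' (EuclideanSpace.basisFun (Fin d) ℝ)]
    have hterm : ∀ i : Fin d,
        ⟪EuclideanSpace.basisFun (Fin d) ℝ i,
          (J : EuclideanSpace ℝ (Fin d) →ₗ[ℝ] EuclideanSpace ℝ (Fin d))
            (EuclideanSpace.basisFun (Fin d) ℝ i)⟫ = lam + 2 * ⟪b, x⟫ := by
      intro i
      have h1 : ⟪EuclideanSpace.basisFun (Fin d) ℝ i, EuclideanSpace.basisFun (Fin d) ℝ i⟫
          = (1:ℝ) := by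
        rw [real_inner_self_eq_norm_sq, (EuclideanSpace.basisFun (Fin d) ℝ).orthonormal.1 i]
        norm_num
      set e := EuclideanSpace.basisFun (Fin d) ℝ i
      rw [ContinuousLinearMap.coe_coe, hDv]
      simp only [inner_add_right, inner_sub_right, real_inner_smul_right, h1, hA0]
      rw [real_inner_comm e x, real_inner_comm e b]
      ring
    rw [Finset.sum_congr rfl (fun i _ => hterm i), Finset.sum_const, Finset.card_univ,
      Fintype.card_fin, nsmul_eq_mul]
  rw [hsum, htr]
  have hdne : (d : ℝ) ≠ 0 := by positivity
  have hs : ((d : ℝ) * (lam + 2 * ⟪b, x⟫)) / d = lam + 2 * ⟪b, x⟫ := by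
    field_simp
  rw [hs, smul_smul]
  rw [← sub_smul (1 / 2 * (2 * lam + 4 * ⟪b, x⟫)) (lam + 2 * ⟪b, x⟫) (ContinuousLinearMap.id ℝ (EuclideanSpace ℝ (Fin d)))]
  have : (1 / 2 : ℝ) * (2 * lam + 4 * ⟪b, x⟫) - (lam + 2 * ⟪b, x⟫) = 0 := by ring
  rw [this, zero_smul ℝ (ContinuousLinearMap.id ℝ (EuclideanSpace ℝ (Fin d)))]
end

section
/- Let d ≥ 1 and let φ : ℝ^d → ℝ^d be twice continuously differentiable with compact support. For each x let J(x) denote the Jacobian matrix (∂_j φ_i(x))_{ij} and let stf(J) := (1/2)(J + Jᵀ) − ((tr J)/d)·I be its symmetric trace-free part. Then ∫_{ℝ^d} ‖stf(J(x))‖_F² dx = ∫_{ℝ^d} [ (1/2)‖J(x)‖_F² + (1/2 − 1/d)(tr J(x))² ] dx, where ‖·‖_F is the Frobenius norm and tr J = Σ_i ∂_i φ_i is the divergence of φ. -/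
open Matrix MeasureTheory

set_option maxHeartbeats 1000000

/-- The Jacobian matrix `J(x)_{ij} = ∂_j φ_i (x)` of a vector field on `ℝᵈ`. -/
noncomputable def jacobian {d : ℕ}
    (φ : EuclideanSpace ℝ (Fin d) → EuclideanSpace ℝ (Fin d))
    (x : EuclideanSpace ℝ (Fin d)) : Matrix (Fin d) (Fin d) ℝ :=
  Matrix.of fun i j => fderiv ℝ φ x (EuclideanSpace.single j (1 : ℝ)) i

/-- The symmetric trace-free part `stf(M) = (1/2)(M + Mᵀ) − ((tr M)/d)·I`. -/
noncomputable def stfMat {d : ℕ} (M : Matrix (Fin d) (Fin d) ℝ) :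
    Matrix (Fin d) (Fin d) ℝ :=
  ((1 : ℝ) / 2) • (M + Mᵀ) - (M.trace / (d : ℝ)) • (1 : Matrix (Fin d) (Fin d) ℝ)

/-- Pointwise algebraic expansion of the Frobenius norm of the symmetric trace-free part. -/
lemma stf_sq_expand {d : ℕ} (hd : 1 ≤ d) (A : Matrix (Fin d) (Fin d) ℝ) :
    ∑ i, ∑ j, (stfMat A i j) ^ 2
      = ((1 / 2 : ℝ) * (∑ i, ∑ j, (A i j) ^ 2) + (1 / 2 - 1 / (d : ℝ)) * A.trace ^ 2)
        + (1 / 2 : ℝ) * ∑ i, ∑ j, (A i j * A j i - A i i * A j j) := by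
  have hd' : (d : ℝ) ≠ 0 := Nat.cast_ne_zero.mpr (by omega)
  set t : ℝ := A.trace with ht
  have htr : t = ∑ i, A i i := rfl
  have key : ∀ i : Fin d, ∑ j, (stfMat A i j) ^ 2
      = (∑ j, ((1/2 : ℝ) * (A i j + A j i)) ^ 2) - (2 * (t / d) * A i i - (t / d) ^ 2) := by
    intro i
    have step : ∀ j, (stfMat A i j) ^ 2
        = ((1/2 : ℝ) * (A i j + A j i)) ^ 2
          - (if i = j then 2 * (t / d) * A i j - (t / d) ^ 2 else 0) := by
      intro j
      simp only [stfMat, Matrix.sub_apply, Matrix.smul_apply, Matrix.add_apply,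
        Matrix.transpose_apply, Matrix.one_apply, smul_eq_mul, mul_ite, mul_one, mul_zero, ← ht]
      split_ifs with h
      · subst h; ring
      · ring
    rw [Finset.sum_congr rfl fun j _ => step j, Finset.sum_sub_distrib,
      Finset.sum_ite_eq Finset.univ i (fun j => 2 * (t / d) * A i j - (t / d) ^ 2)]
    simp
  rw [Finset.sum_congr rfl fun i _ => key i, Finset.sum_sub_distrib]
  have e1 : ∑ i, ∑ j, ((1/2 : ℝ) * (A i j + A j i)) ^ 2
      = (1/2 : ℝ) * (∑ i, ∑ j, (A i j) ^ 2) + (1/2 : ℝ) * (∑ i, ∑ j, A i j * A j i) := by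
    have expand : ∀ (i j : Fin d), ((1/2 : ℝ) * (A i j + A j i)) ^ 2
        = (1/4 : ℝ) * (A i j) ^ 2 + (1/2 : ℝ) * (A i j * A j i) + (1/4 : ℝ) * (A j i) ^ 2 := by
      intros; ring
    simp only [expand, Finset.sum_add_distrib, ← Finset.mul_sum]
    have hc : ∑ i, ∑ j, (A j i) ^ 2 = ∑ i, ∑ j, (A i j) ^ 2 := Finset.sum_comm
    rw [hc]; ring
  have e2 : ∑ i, ∑ j, (A i i * A j j) = t ^ 2 := by
    rw [htr, sq, Finset.sum_mul_sum]
  have e3 : ∑ i, (2 * (t / (d:ℝ)) * A i i - (t / d) ^ 2)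
      = 2 * (t / d) * t - (d : ℝ) * (t / d) ^ 2 := by
    rw [Finset.sum_sub_distrib, ← Finset.mul_sum, ← htr]
    simp [Finset.card_univ]
  have e4 : ∑ i, ∑ j, (A i j * A j i - A i i * A j j)
      = (∑ i, ∑ j, A i j * A j i) - t ^ 2 := by
    simp only [Finset.sum_sub_distrib]
    rw [e2]
  rw [e1, e3, e4]
  field_simp
  ring

lemma fderiv_apply_const' {d : ℕ} {g : EuclideanSpace ℝ (Fin d) → ℝ} (hg : ContDiff ℝ 2 g)
    (w v x : EuclideanSpace ℝ (Fin d)) :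
    fderiv ℝ (fun y => fderiv ℝ g y w) x v = fderiv ℝ (fderiv ℝ g) x v w := by
  have h1 : DifferentiableAt ℝ (fderiv ℝ g) x :=
    ((hg.fderiv_right (m := 1) (by norm_num)).differentiable one_ne_zero) x
  rw [show (fun y => fderiv ℝ g y w)
      = (ContinuousLinearMap.apply ℝ ℝ w) ∘ (fderiv ℝ g) from rfl,
    fderiv_comp x (ContinuousLinearMap.apply ℝ ℝ w).differentiableAt h1]
  simp

/-- Double integration by parts: `∫ ∂_v f ∂_w g = ∫ ∂_w f ∂_v g` for compactly supported
`C²` functions. -/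
lemma ibp_swap {d : ℕ} {f g : EuclideanSpace ℝ (Fin d) → ℝ}
    (hf : ContDiff ℝ 2 f) (hg : ContDiff ℝ 2 g)
    (hsf : HasCompactSupport f) (hsg : HasCompactSupport g)
    (v w : EuclideanSpace ℝ (Fin d)) :
    ∫ x, fderiv ℝ f x v * fderiv ℝ g x w = ∫ x, fderiv ℝ f x w * fderiv ℝ g x v := by
  have hint : ∀ (F : EuclideanSpace ℝ (Fin d) → ℝ), Continuous F → HasCompactSupport F →
      Integrable F := fun F c s => c.integrable_of_hasCompactSupport s
  have hfd : Differentiable ℝ f := hf.differentiable two_ne_zero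
  have hgd1 : ContDiff ℝ 1 (fderiv ℝ g) := hg.fderiv_right (m := 1) (by norm_num)
  have hg2c : Continuous (fderiv ℝ (fderiv ℝ g)) :=
    (hgd1.fderiv_right (m := 0) (by norm_num)).continuous
  have hcf : Continuous f := hf.continuous
  have hcf' : ∀ u, Continuous fun x => fderiv ℝ f x u := fun u =>
    (hf.continuous_fderiv two_ne_zero).clm_apply continuous_const
  have hcg' : ∀ u, Continuous fun x => fderiv ℝ g x u := fun u =>
    (hg.continuous_fderiv two_ne_zero).clm_apply continuous_const
  have hsf' : ∀ u, HasCompactSupport fun x => fderiv ℝ f x u := fun u =>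
    hsf.fderiv_apply ℝ u
  have hsg' : ∀ u, HasCompactSupport fun x => fderiv ℝ g x u := fun u =>
    hsg.fderiv_apply ℝ u
  have hgdiff : ∀ u, Differentiable ℝ fun x => fderiv ℝ g x u := fun u x =>
    ((ContinuousLinearMap.apply ℝ ℝ u).differentiableAt).comp x ((hgd1.differentiable one_ne_zero) x)
  have hD2eq : ∀ u u', (fun x => fderiv ℝ (fun y => fderiv ℝ g y u) x u')
      = fun x => fderiv ℝ (fderiv ℝ g) x u' u :=
    fun u u' => funext fun x => fderiv_apply_const' hg u u' x
  have hD2c : ∀ u u', Continuous fun x => fderiv ℝ (fun y => fderiv ℝ g y u) x u' := by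
    intro u u'
    rw [hD2eq]
    exact (hg2c.clm_apply continuous_const).clm_apply continuous_const
  have hD2s : ∀ u u', HasCompactSupport fun x => fderiv ℝ (fun y => fderiv ℝ g y u) x u' := by
    intro u u'
    rw [hD2eq]
    exact ((hsg.fderiv ℝ).fderiv_apply ℝ u').comp_left (g := fun L : _ →L[ℝ] ℝ => L u) rfl
  have A := integral_mul_fderiv_eq_neg_fderiv_mul_of_integrable
    (f := f) (g := fun x => fderiv ℝ g x w) (v := v)
    (hint _ ((hcf' v).mul (hcg' w)) ((hsg' w).mul_left))
    (hint _ (hcf.mul (hD2c w v)) ((hD2s w v).mul_left))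
    (hint _ (hcf.mul (hcg' w)) ((hsg' w).mul_left))
    (fun x _ => hfd x) (fun x _ => hgdiff w x)
  have C := integral_mul_fderiv_eq_neg_fderiv_mul_of_integrable
    (f := f) (g := fun x => fderiv ℝ g x v) (v := w)
    (hint _ ((hcf' w).mul (hcg' v)) ((hsg' v).mul_left))
    (hint _ (hcf.mul (hD2c v w)) ((hD2s v w).mul_left))
    (hint _ (hcf.mul (hcg' v)) ((hsg' v).mul_left))
    (fun x _ => hfd x) (fun x _ => hgdiff v x)
  have hswap : ∀ x, fderiv ℝ (fun y => fderiv ℝ g y w) x v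
      = fderiv ℝ (fun y => fderiv ℝ g y v) x w := by
    intro x
    rw [fderiv_apply_const' hg w v x, fderiv_apply_const' hg v w x]
    exact (hg.contDiffAt.isSymmSndFDerivAt (by simp)).eq v w
  have hAC : ∫ x, f x * fderiv ℝ (fun y => fderiv ℝ g y w) x v
      = ∫ x, f x * fderiv ℝ (fun y => fderiv ℝ g y v) x w :=
    integral_congr_ae (Filter.Eventually.of_forall fun x => by simp only [hswap x])
  rw [hAC, C] at A
  linarith [A]

/-- **Integral identity combining eqs. (4.5) and (4.6).**
For `φ : ℝᵈ → ℝᵈ` twice continuously differentiable with compact support: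
`∫ ‖stf J‖_F² dx = ∫ [(1/2)‖J‖_F² + (1/2 − 1/d)(tr J)²] dx`. -/
theorem stf_jacobian_integral_identity
    (d : ℕ) (hd : 1 ≤ d)
    (φ : EuclideanSpace ℝ (Fin d) → EuclideanSpace ℝ (Fin d))
    (hφ : ContDiff ℝ 2 φ) (hsupp : HasCompactSupport φ) :
    (∫ x : EuclideanSpace ℝ (Fin d), ∑ i, ∑ j, (stfMat (jacobian φ x) i j) ^ 2)
      = ∫ x : EuclideanSpace ℝ (Fin d),
          ((1 / 2 : ℝ) * (∑ i, ∑ j, (jacobian φ x i j) ^ 2)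
            + (1 / 2 - 1 / (d : ℝ)) * (jacobian φ x).trace ^ 2) := by
  classical
  set e : Fin d → EuclideanSpace ℝ (Fin d) := fun j => EuclideanSpace.single j (1 : ℝ) with he
  have hφd : Differentiable ℝ φ := hφ.differentiable two_ne_zero
  -- components of φ
  have hfi : ∀ i, ContDiff ℝ 2 (fun x => φ x i) := by
    intro i
    have h := (EuclideanSpace.proj (𝕜 := ℝ) i).contDiff.comp hφ
    simpa [Function.comp_def] using h
  have hsfi : ∀ i, HasCompactSupport (fun x => φ x i) := by
    intro i
    have h := hsupp.comp_left (g := fun v : EuclideanSpace ℝ (Fin d) => v i) rfl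
    simpa [Function.comp_def] using h
  -- Jacobian entries as derivatives of components
  have hJ : ∀ (x : EuclideanSpace ℝ (Fin d)) i j,
      jacobian φ x i j = fderiv ℝ (fun y => φ y i) x (e j) := by
    intro x i j
    have h := fderiv_comp (𝕜 := ℝ) x (EuclideanSpace.proj (𝕜 := ℝ) i).differentiableAt (hφd x)
    have h2 : fderiv ℝ (fun y => φ y i) x
        = (EuclideanSpace.proj (𝕜 := ℝ) i).comp (fderiv ℝ φ x) := by
      rw [show (fun y => φ y i) = (EuclideanSpace.proj (𝕜 := ℝ) i) ∘ φ from rfl, h,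
        ContinuousLinearMap.fderiv]
    rw [h2]
    rfl
  -- continuity and support of Jacobian entries
  have hJc : ∀ i j, Continuous fun x => jacobian φ x i j := by
    intro i j
    simp only [hJ]
    exact ((hfi i).continuous_fderiv two_ne_zero).clm_apply continuous_const
  have hJzero : ∀ x, x ∉ tsupport (fderiv ℝ φ) → jacobian φ x = 0 := by
    intro x hx
    ext i j
    simp [jacobian, image_eq_zero_of_notMem_tsupport hx]
  have hKc : IsCompact (tsupport (fderiv ℝ φ)) := hsupp.fderiv ℝ
  have hint : ∀ (F : EuclideanSpace ℝ (Fin d) → ℝ), Continuous F →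
      (∀ x, x ∉ tsupport (fderiv ℝ φ) → F x = 0) → Integrable F := fun F c h =>
    c.integrable_of_hasCompactSupport (HasCompactSupport.intro hKc h)
  have hTc : Continuous fun x => (jacobian φ x).trace := by
    simp only [Matrix.trace, Matrix.diag]
    exact continuous_finset_sum _ fun i _ => hJc i i
  -- integrability of the two pieces
  have hR : Integrable (fun x => (1 / 2 : ℝ) * (∑ i, ∑ j, (jacobian φ x i j) ^ 2)
      + (1 / 2 - 1 / (d : ℝ)) * (jacobian φ x).trace ^ 2) := by
    apply hint
    · exact (continuous_const.mul (continuous_finset_sum _ fun i _ =>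
        continuous_finset_sum _ fun j _ => (hJc i j).pow 2)).add
        (continuous_const.mul (hTc.pow 2))
    · intro x hx; simp [hJzero x hx]
  have hcross : ∀ i j, Integrable (fun x =>
      jacobian φ x i j * jacobian φ x j i - jacobian φ x i i * jacobian φ x j j) := by
    intro i j
    apply hint
    · exact (((hJc i j).mul (hJc j i)).sub ((hJc i i).mul (hJc j j)))
    · intro x hx; simp [hJzero x hx]
  have hcrossmul : ∀ i j, Integrable (fun x => jacobian φ x i j * jacobian φ x j i) := by
    intro i j
    apply hint
    · exact (hJc i j).mul (hJc j i)
    · intro x hx; simp [hJzero x hx]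
  have hcrossSum : ∀ i : Fin d, Integrable (fun x =>
      ∑ j, (jacobian φ x i j * jacobian φ x j i - jacobian φ x i i * jacobian φ x j j)) :=
    fun i => integrable_finset_sum _ fun j _ => hcross i j
  have hC : Integrable (fun x => (1 / 2 : ℝ) * ∑ i, ∑ j,
      (jacobian φ x i j * jacobian φ x j i - jacobian φ x i i * jacobian φ x j j)) :=
    (integrable_finset_sum _ fun i _ => hcrossSum i).const_mul _
  -- pointwise expansion
  have hsplit : (fun x : EuclideanSpace ℝ (Fin d) => ∑ i, ∑ j, (stfMat (jacobian φ x) i j) ^ 2)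
      = fun x => ((1 / 2 : ℝ) * (∑ i, ∑ j, (jacobian φ x i j) ^ 2)
          + (1 / 2 - 1 / (d : ℝ)) * (jacobian φ x).trace ^ 2)
        + (1 / 2 : ℝ) * ∑ i, ∑ j,
          (jacobian φ x i j * jacobian φ x j i - jacobian φ x i i * jacobian φ x j j) :=
    funext fun x => stf_sq_expand hd (jacobian φ x)
  rw [hsplit, integral_add hR hC]
  -- the cross term integrates to zero
  have hzero : (∫ x, (1 / 2 : ℝ) * ∑ i, ∑ j,
      (jacobian φ x i j * jacobian φ x j i - jacobian φ x i i * jacobian φ x j j)) = 0 := by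
    rw [integral_const_mul]
    rw [integral_finset_sum _ fun i _ => hcrossSum i]
    have : ∀ i : Fin d, (∫ x, ∑ j,
        (jacobian φ x i j * jacobian φ x j i - jacobian φ x i i * jacobian φ x j j)) = 0 := by
      intro i
      rw [integral_finset_sum _ fun j _ => hcross i j]
      apply Finset.sum_eq_zero
      intro j _
      have hdiag : Integrable (fun x => jacobian φ x i i * jacobian φ x j j) := by
        apply hint
        · exact (hJc i i).mul (hJc j j)
        · intro x hx; simp [hJzero x hx]
      rw [integral_sub (hcrossmul i j) hdiag, sub_eq_zero]
      simp only [hJ]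
      exact ibp_swap (hfi i) (hfi j) (hsfi i) (hsfi j) (e j) (e i)
    rw [Finset.sum_eq_zero fun i _ => this i, mul_zero]
  rw [hzero, add_zero]
end

section
/- Let d ≥ 3 and let φ : ℝ^d → ℝ^d be twice continuously differentiable with compact support. Suppose that at every x ∈ ℝ^d the Jacobian matrix J(x) = (∂_j φ_i(x))_{ij} has vanishing symmetric trace-free part, i.e. (1/2)(J(x) + J(x)ᵀ) − ((tr J(x))/d)·I = 0. Then φ(x) = 0 for all x ∈ ℝ^d. -/
open Matrix MeasureTheory

/-! ### Auxiliary material -/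

noncomputable def ee {d : ℕ} (j : Fin d) : EuclideanSpace ℝ (Fin d) :=
  EuclideanSpace.single j (1 : ℝ)

lemma euclidean_sum_single {d : ℕ} (v : EuclideanSpace ℝ (Fin d)) :
    ∑ j, v j • ee j = v := by
  ext i
  have : (∑ j, v j • (ee j : EuclideanSpace ℝ (Fin d))) i
      = ∑ j, (v j • (ee j : EuclideanSpace ℝ (Fin d))) i :=
    by rw [WithLp.ofLp_sum]; exact Finset.sum_apply i Finset.univ _
  rw [this]
  simp [ee, EuclideanSpace.single_apply, mul_ite]

lemma clm_zero_of_basis {d : ℕ} {F : Type*} [NormedAddCommGroup F] [NormedSpace ℝ F]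
    (f : EuclideanSpace ℝ (Fin d) →L[ℝ] F)
    (h : ∀ j, f (ee j) = 0) : f = 0 := by
  ext v
  rw [← euclidean_sum_single v, map_sum]
  simp [h]

lemma const_along {d : ℕ} {g : EuclideanSpace ℝ (Fin d) → ℝ} (hg : Differentiable ℝ g)
    (v : EuclideanSpace ℝ (Fin d)) (h : ∀ y, fderiv ℝ g y v = 0)
    (x : EuclideanSpace ℝ (Fin d)) (t : ℝ) : g (x + t • v) = g x := by
  have hline : ∀ s : ℝ, HasDerivAt (fun s : ℝ => g (x + s • v)) 0 s := by
    intro s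
    have h1 : HasDerivAt (fun s : ℝ => x + s • v) v s := by
      simpa using ((hasDerivAt_id s).smul_const v).const_add x
    have h2 := (hg (x + s • v)).hasFDerivAt.comp_hasDerivAt s h1
    simpa [h, Function.comp_def] using h2
  have hdiff : Differentiable ℝ (fun s : ℝ => g (x + s • v)) :=
    fun s => (hline s).differentiableAt
  have hder : ∀ s, deriv (fun s : ℝ => g (x + s • v)) s = 0 := fun s => (hline s).deriv
  simpa using is_const_of_deriv_eq_zero hdiff hder t 0

lemma fderiv_translate {d : ℕ} {g : EuclideanSpace ℝ (Fin d) → ℝ} (hg : Differentiable ℝ g)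
    (c x : EuclideanSpace ℝ (Fin d)) :
    fderiv ℝ (fun y => g (y + c)) x = fderiv ℝ g (x + c) := by
  have h1 : HasFDerivAt (fun y : EuclideanSpace ℝ (Fin d) => y + c)
      (ContinuousLinearMap.id ℝ _) x := (hasFDerivAt_id x).add_const c
  simpa [Function.comp_def] using ((hg (x + c)).hasFDerivAt.comp x h1).fderiv

/-- The coordinate functions `u i j = ∂_j φ_i` of the Jacobian. -/
noncomputable def uu {d : ℕ} (φ : EuclideanSpace ℝ (Fin d) → EuclideanSpace ℝ (Fin d))
    (i j : Fin d) (x : EuclideanSpace ℝ (Fin d)) : ℝ :=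
  fderiv ℝ φ x (ee j) i

/-- The second derivative entries `T i j k = ∂_k ∂_j φ_i`. -/
noncomputable def TT {d : ℕ} (φ : EuclideanSpace ℝ (Fin d) → EuclideanSpace ℝ (Fin d))
    (i j k : Fin d) (x : EuclideanSpace ℝ (Fin d)) : ℝ :=
  fderiv ℝ (fderiv ℝ φ) x (ee k) (ee j) i

section basic
variable {d : ℕ} {φ : EuclideanSpace ℝ (Fin d) → EuclideanSpace ℝ (Fin d)}
  (hφ : ContDiff ℝ 2 φ)
include hφ

lemma Ddiff : Differentiable ℝ (fderiv ℝ φ) :=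
  (hφ.fderiv_right (m := 1) (by norm_num)).differentiable (by norm_num)

/-- The linear functional extracting `F (ee j) i` from a CLM `F`. -/
noncomputable def LL (d : ℕ) (i j : Fin d) :
    (EuclideanSpace ℝ (Fin d) →L[ℝ] EuclideanSpace ℝ (Fin d)) →L[ℝ] ℝ :=
  (EuclideanSpace.proj i).comp
    (ContinuousLinearMap.apply ℝ (EuclideanSpace ℝ (Fin d)) (ee j))

omit hφ in
lemma uu_eq (i j : Fin d) : uu φ i j = fun x => LL d i j (fderiv ℝ φ x) := rfl

lemma uu_diff (i j : Fin d) : Differentiable ℝ (uu φ i j) := by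
  rw [uu_eq]
  exact (LL d i j).differentiable.comp (Ddiff hφ)

lemma uu_fderiv (i j : Fin d) (x : EuclideanSpace ℝ (Fin d)) :
    fderiv ℝ (uu φ i j) x = (LL d i j).comp (fderiv ℝ (fderiv ℝ φ) x) := by
  rw [uu_eq]
  exact ((LL d i j).hasFDerivAt.comp x (Ddiff hφ x).hasFDerivAt).fderiv

lemma uu_fderiv_apply (i j k : Fin d) (x : EuclideanSpace ℝ (Fin d)) :
    fderiv ℝ (uu φ i j) x (ee k) = TT φ i j k x := by
  rw [uu_fderiv hφ]; rfl

lemma TT_symm (i j k : Fin d) (x : EuclideanSpace ℝ (Fin d)) :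
    TT φ i j k x = TT φ i k j x := by
  have h := second_derivative_symmetric
    (f := φ) (f' := fderiv ℝ φ) (f'' := fderiv ℝ (fderiv ℝ φ) x) (x := x)
    (fun y => ((hφ.differentiable (by norm_num)) y).hasFDerivAt)
    ((Ddiff hφ x).hasFDerivAt) (ee k) (ee j)
  exact congrArg (fun v => v i) h

end basic

/-! ### The main theorem -/

/-- **Rigidity for compactly supported conformal Killing fields, `d ≥ 3`.**
If `φ : ℝᵈ → ℝᵈ` is C², compactly supported, and `stf(Dφ(x)) = 0` everywhere,
then `φ ≡ 0`. -/
theorem compact_support_conformal_killing_eq_zero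
    (d : ℕ) (hd : 3 ≤ d)
    (φ : EuclideanSpace ℝ (Fin d) → EuclideanSpace ℝ (Fin d))
    (hφ : ContDiff ℝ 2 φ) (hsupp : HasCompactSupport φ)
    (hstf : ∀ x, stfMat (jacobian φ x) = 0) :
    ∀ x, φ x = 0 := by
  classical
  have hdd : (d : ℝ) ≠ 0 := Nat.cast_ne_zero.2 (by omega)
  -- entrywise form of the hypothesis
  have hentry : ∀ (x : EuclideanSpace ℝ (Fin d)) i j,
      2⁻¹ * uu φ i j x + 2⁻¹ * uu φ j i x
        - (if i = j then (∑ k, uu φ k k x) / d else 0) = 0 := by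
    intro x i j
    have h := congrFun (congrFun (hstf x) i) j
    simpa [stfMat, jacobian, uu, ee, Matrix.sub_apply, Matrix.add_apply, Matrix.smul_apply,
      Matrix.transpose_apply, Matrix.one_apply, Matrix.trace, Matrix.diag, smul_eq_mul] using h
  have hoff : ∀ (x : EuclideanSpace ℝ (Fin d)) i j, i ≠ j → uu φ i j x = - uu φ j i x := by
    intro x i j hij
    have h := hentry x i j
    rw [if_neg hij] at h
    linarith
  have hdiag : ∀ (x : EuclideanSpace ℝ (Fin d)) i i', uu φ i i x = uu φ i' i' x := by
    intro x i i'
    have h1 := hentry x i i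
    have h2 := hentry x i' i'
    rw [if_pos rfl] at h1 h2
    linarith
  -- second-derivative relations
  have hsym : ∀ i j k (x : EuclideanSpace ℝ (Fin d)), TT φ i j k x = TT φ i k j x :=
    fun i j k x => TT_symm hφ i j k x
  have hanti : ∀ i j, i ≠ j → ∀ k (x : EuclideanSpace ℝ (Fin d)),
      TT φ i j k x = - TT φ j i k x := by
    intro i j hij k x
    have hfun : uu φ i j = fun y => - uu φ j i y := funext fun y => hoff y i j hij
    have h1 : fderiv ℝ (uu φ i j) x (ee k)
        = fderiv ℝ (fun y => - uu φ j i y) x (ee k) := by rw [hfun]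
    rw [uu_fderiv_apply hφ, fderiv_fun_neg, ContinuousLinearMap.neg_apply,
      uu_fderiv_apply hφ] at h1
    exact h1
  have hdiagT : ∀ i i' k (x : EuclideanSpace ℝ (Fin d)), TT φ i i k x = TT φ i' i' k x := by
    intro i i' k x
    have hfun : uu φ i i = uu φ i' i' := funext fun y => hdiag y i i'
    have h1 : fderiv ℝ (uu φ i i) x (ee k) = fderiv ℝ (uu φ i' i') x (ee k) := by rw [hfun]
    rwa [uu_fderiv_apply hφ, uu_fderiv_apply hφ] at h1
  have hdist : ∀ i j k (x : EuclideanSpace ℝ (Fin d)), i ≠ j → i ≠ k → j ≠ k →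
      TT φ i j k x = 0 := by
    intro i j k x hij hik hjk
    have e1 := hanti i j hij k x
    have e2 := hsym j i k x
    have e3 := hanti j k hjk i x
    have e4 := hsym k j i x
    have e5 := hanti k i hik.symm j x
    have e6 := hsym i k j x
    linarith
  have hijj : ∀ i j (x : EuclideanSpace ℝ (Fin d)), i ≠ j →
      TT φ i j j x = - TT φ i i i x := by
    intro i j x hij
    calc TT φ i j j x = - TT φ j i j x := hanti i j hij j x
      _ = - TT φ j j i x := by rw [hsym j i j]
      _ = - TT φ i i i x := by rw [hdiagT j i i x]
  have hiij : ∀ i j (x : EuclideanSpace ℝ (Fin d)), TT φ i i j x = TT φ j j j x :=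
    fun i j x => hdiagT i j j x
  -- existence of a third index
  have hthird : ∀ i k : Fin d, ∃ j : Fin d, j ≠ i ∧ j ≠ k := by
    intro i k
    by_contra hcon
    push_neg at hcon
    have hsub : (Finset.univ : Finset (Fin d)) ⊆ {i, k} := by
      intro j _
      rcases eq_or_ne j i with h | h
      · simp [h]
      · simp [hcon j h]
    have h1 := Finset.card_le_card hsub
    have h2 : ({i, k} : Finset (Fin d)).card ≤ 2 := by
      refine le_trans (Finset.card_insert_le _ _) ?_
      simp
    simp [Finset.card_univ] at h1
    omega
  -- the diagonal second derivative is constant in orthogonal directions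
  have hm_const : ∀ i k : Fin d, i ≠ k → ∀ (x : EuclideanSpace ℝ (Fin d)) (t : ℝ),
      TT φ i i i (x + t • ee k) = TT φ i i i x := by
    intro i k hik x t
    obtain ⟨j, hji, hjk⟩ := hthird i k
    have hz : ∀ y, fderiv ℝ (uu φ i j) y (ee k) = 0 := by
      intro y
      rw [uu_fderiv_apply hφ]
      exact hdist i j k y hji.symm hik hjk
    have hconst : ∀ y, uu φ i j (y + t • ee k) = uu φ i j y :=
      fun y => const_along (uu_diff hφ i j) (ee k) hz y t
    have hfun : (fun y => uu φ i j (y + t • ee k)) = uu φ i j := funext hconst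
    have h1 : fderiv ℝ (fun y => uu φ i j (y + t • ee k)) x (ee j)
        = fderiv ℝ (uu φ i j) x (ee j) := by rw [hfun]
    rw [fderiv_translate (uu_diff hφ i j) (t • ee k) x, uu_fderiv_apply hφ,
      uu_fderiv_apply hφ] at h1
    have h2 := hijj i j (x + t • ee k) hji.symm
    have h3 := hijj i j x hji.symm
    linarith
  -- far points escape the support
  have hfar : ∀ (x : EuclideanSpace ℝ (Fin d)) (k : Fin d),
      ∃ t : ℝ, x + t • ee k ∉ tsupport φ := by
    intro x k
    obtain ⟨R, hR⟩ := hsupp.isBounded.subset_closedBall 0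
    set t : ℝ := |R| + ‖x‖ + 1 with htdef
    refine ⟨t, fun hmem => ?_⟩
    have h1 := hR hmem
    rw [Metric.mem_closedBall, dist_zero_right] at h1
    have h2 : ‖t • (ee k : EuclideanSpace ℝ (Fin d))‖ ≤ ‖x + t • ee k‖ + ‖x‖ := by
      have h := norm_sub_le (x + t • (ee k : EuclideanSpace ℝ (Fin d))) x
      simpa using h
    have h3 : ‖t • (ee k : EuclideanSpace ℝ (Fin d))‖ = |t| := by
      rw [norm_smul, ee, EuclideanSpace.norm_single]
      simp
    have ht0 : 0 ≤ t := by positivity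
    have h4 : |R| ≥ R := le_abs_self R
    rw [h3, abs_of_nonneg ht0] at h2
    linarith
  have hout2 : ∀ y, y ∉ tsupport φ → fderiv ℝ (fderiv ℝ φ) y = 0 := by
    intro y hy
    exact image_eq_zero_of_notMem_tsupport
      (fun hmem => hy (tsupport_fderiv_subset ℝ (tsupport_fderiv_subset ℝ hmem)))
  have hout1 : ∀ y, y ∉ tsupport φ → fderiv ℝ φ y = 0 := by
    intro y hy
    exact image_eq_zero_of_notMem_tsupport (fun hmem => hy (tsupport_fderiv_subset ℝ hmem))
  -- the diagonal second derivatives vanish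
  have hmzero : ∀ i (x : EuclideanSpace ℝ (Fin d)), TT φ i i i x = 0 := by
    intro i x
    haveI : Nontrivial (Fin d) := Fin.nontrivial_iff_two_le.mpr (by omega)
    obtain ⟨k, hk⟩ := exists_ne i
    obtain ⟨t, ht⟩ := hfar x k
    have h0 := hout2 _ ht
    have h1 : TT φ i i i (x + t • ee k) = 0 := by simp [TT, h0]
    rw [← hm_const i k hk.symm x t]
    exact h1
  -- all second derivatives vanish
  have hT0 : ∀ i j k (x : EuclideanSpace ℝ (Fin d)), TT φ i j k x = 0 := by
    intro i j k x
    rcases eq_or_ne i j with rfl | hij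
    · rcases eq_or_ne i k with rfl | hik
      · exact hmzero i x
      · rw [hiij i k x]
        exact hmzero k x
    · rcases eq_or_ne j k with rfl | hjk
      · rw [hijj i j x hij, hmzero i x, neg_zero]
      · rcases eq_or_ne i k with rfl | hik
        · rw [hsym i j i x, hiij i j x]
          exact hmzero j x
        · exact hdist i j k x hij hik hjk
  -- the Jacobian entries are constant, hence zero
  have hufz : ∀ i j (x : EuclideanSpace ℝ (Fin d)), fderiv ℝ (uu φ i j) x = 0 := by
    intro i j x
    apply clm_zero_of_basis
    intro k
    rw [uu_fderiv_apply hφ]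
    exact hT0 i j k x
  obtain ⟨p, hp⟩ : ∃ p : EuclideanSpace ℝ (Fin d), p ∉ tsupport φ := by
    obtain ⟨t, ht⟩ := hfar 0 ⟨0, by omega⟩
    exact ⟨_, ht⟩
  have huz : ∀ i j (x : EuclideanSpace ℝ (Fin d)), uu φ i j x = 0 := by
    intro i j x
    have hc := is_const_of_fderiv_eq_zero (uu_diff hφ i j) (hufz i j) x p
    rw [hc]
    simp [uu, hout1 p hp]
  have hDz : ∀ x : EuclideanSpace ℝ (Fin d), fderiv ℝ φ x = 0 := by
    intro x
    apply clm_zero_of_basis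
    intro j
    ext i
    simpa [uu] using huz i j x
  intro x
  have hc := is_const_of_fderiv_eq_zero (hφ.differentiable (by norm_num)) hDz x p
  rw [hc]
  exact image_eq_zero_of_notMem_tsupport hp
end

section
/- Let d ≥ 3 and let Ω be a nonempty bounded open convex subset of ℝ^d. Let φ : ℝ^d → ℝ^d be twice continuously differentiable on an open set containing the closure of Ω. Suppose that (i) at every x ∈ Ω the Jacobian matrix J(x) = (∂_j φ_i(x))_{ij} has vanishing symmetric trace-free part, i.e. (1/2)(J(x) + J(x)ᵀ) − ((tr J(x))/d)·I = 0, and (ii) φ(x) = 0 for every x in the frontier of Ω. Then φ(x) = 0 for every x ∈ Ω. -/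
open Matrix MeasureTheory

/-- **Rigidity of conformal Killing fields on a bounded convex domain, `d ≥ 3`.**
If `φ` is C² near `closure Ω`, satisfies `stf(Dφ) = 0` on `Ω`, and vanishes on
the boundary `frontier Ω`, then `φ ≡ 0` on `Ω`. -/
theorem conformal_killing_rigidity_domain
    (d : ℕ) (hd : 3 ≤ d)
    (Ω : Set (EuclideanSpace ℝ (Fin d)))
    (hΩne : Ω.Nonempty) (hΩopen : IsOpen Ω)
    (hΩbdd : Bornology.IsBounded Ω) (hΩconv : Convex ℝ Ω)
    (φ : EuclideanSpace ℝ (Fin d) → EuclideanSpace ℝ (Fin d))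
    (hreg : ∃ U : Set (EuclideanSpace ℝ (Fin d)),
        IsOpen U ∧ closure Ω ⊆ U ∧ ContDiffOn ℝ 2 φ U)
    (hstf : ∀ x ∈ Ω, stfMat (jacobian φ x) = 0)
    (hbdry : ∀ x ∈ frontier Ω, φ x = 0) :
    ∀ x ∈ Ω, φ x = 0 := by
  obtain ⟨U, hUopen, hUsub, hφ⟩ := hreg
  have hφdiff : ∀ x ∈ Ω, DifferentiableAt ℝ φ x := fun x hx =>
    (hφ.differentiableOn (by norm_num)).differentiableAt
      (hUopen.mem_nhds (hUsub (subset_closure hx)))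
  -- entrywise consequences of stf = 0
  have hJ : ∀ x ∈ Ω, ∀ i j : Fin d, i ≠ j →
      fderiv ℝ φ x (EuclideanSpace.single j 1) i
        = - fderiv ℝ φ x (EuclideanSpace.single i 1) j ∧
      fderiv ℝ φ x (EuclideanSpace.single i 1) i
        = fderiv ℝ φ x (EuclideanSpace.single j 1) j := by
    intro x hx i j hij
    have h0 := hstf x hx
    have hent : ∀ a b, stfMat (jacobian φ x) a b = 0 := fun a b => by rw [h0]; rfl
    have h1 := hent i j
    have h2 := hent i i
    have h3 := hent j j
    simp [stfMat, Matrix.sub_apply, Matrix.add_apply, Matrix.smul_apply,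
      Matrix.transpose_apply, Matrix.one_apply, hij, smul_eq_mul, jacobian] at h1 h2 h3
    constructor <;> linarith
  intro x₀ hx₀
  have key : ∀ i j : Fin d, i ≠ j → φ x₀ i = 0 := by
    intro i j hij
    set L : ℂ →L[ℝ] EuclideanSpace ℝ (Fin d) :=
      Complex.reCLM.smulRight (EuclideanSpace.single i (1 : ℝ))
        + Complex.imCLM.smulRight (EuclideanSpace.single j (1 : ℝ)) with hL
    set ι : ℂ → EuclideanSpace ℝ (Fin d) := fun z => x₀ + L z with hι
    have hι0 : ι 0 = x₀ := by simp [hι]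
    have hιcont : Continuous ι := continuous_const.add L.continuous
    set S : Set ℂ := ι ⁻¹' Ω with hS
    have hSopen : IsOpen S := hΩopen.preimage hιcont
    have h0S : (0 : ℂ) ∈ S := by rw [hS, Set.mem_preimage, hι0]; exact hx₀
    -- S is bounded
    obtain ⟨R, hR⟩ := hΩbdd.exists_norm_le
    have hSbdd : Bornology.IsBounded S := by
      rw [isBounded_iff_forall_norm_le]
      refine ⟨2 * (R + ‖x₀‖), fun z hz => ?_⟩
      have hLz : ‖L z‖ ≤ R + ‖x₀‖ := by
        have h1 : L z = ι z - x₀ := by simp [hι]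
        rw [h1]
        calc ‖ι z - x₀‖ ≤ ‖ι z‖ + ‖x₀‖ := norm_sub_le _ _
          _ ≤ R + ‖x₀‖ := by have := hR (ι z) hz; linarith
      have hre : |z.re| ≤ ‖L z‖ := by
        have h1 : z.re = inner ℝ (EuclideanSpace.single i (1 : ℝ)) (L z) := by
          simp [EuclideanSpace.inner_single_left, hL,
            ContinuousLinearMap.add_apply, ContinuousLinearMap.smulRight_apply,
            PiLp.add_apply, PiLp.smul_apply, EuclideanSpace.single_apply, hij.symm,
            smul_eq_mul]
        rw [h1]
        calc |inner ℝ (EuclideanSpace.single i (1 : ℝ)) (L z)|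
            ≤ ‖(EuclideanSpace.single i (1 : ℝ) : EuclideanSpace ℝ (Fin d))‖ * ‖L z‖ :=
              abs_real_inner_le_norm _ _
          _ = ‖L z‖ := by rw [EuclideanSpace.norm_single]; simp
      have him : |z.im| ≤ ‖L z‖ := by
        have h1 : z.im = inner ℝ (EuclideanSpace.single j (1 : ℝ)) (L z) := by
          simp [EuclideanSpace.inner_single_left, hL,
            ContinuousLinearMap.add_apply, ContinuousLinearMap.smulRight_apply,
            PiLp.add_apply, PiLp.smul_apply, EuclideanSpace.single_apply, hij,
            smul_eq_mul]
        rw [h1]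
        calc |inner ℝ (EuclideanSpace.single j (1 : ℝ)) (L z)|
            ≤ ‖(EuclideanSpace.single j (1 : ℝ) : EuclideanSpace ℝ (Fin d))‖ * ‖L z‖ :=
              abs_real_inner_le_norm _ _
          _ = ‖L z‖ := by rw [EuclideanSpace.norm_single]; simp
      calc ‖z‖ ≤ |z.re| + |z.im| := Complex.norm_le_abs_re_add_abs_im z
        _ ≤ 2 * (R + ‖x₀‖) := by linarith
    have hclS : closure S ⊆ ι ⁻¹' closure Ω :=
      closure_minimal (Set.preimage_mono subset_closure)
        (isClosed_closure.preimage hιcont)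
    set f : ℂ → ℂ := fun z => ((φ (ι z) i : ℝ) : ℂ) + (φ (ι z) j : ℝ) • Complex.I with hf
    -- continuity on closure S
    have hcomp : ContinuousOn (φ ∘ ι) (closure S) :=
      hφ.continuousOn.comp hιcont.continuousOn (fun z hz => hUsub (hclS hz))
    have hfc : ContinuousOn f (closure S) := by
      apply ContinuousOn.add
      · exact Complex.continuous_ofReal.comp_continuousOn
          (((EuclideanSpace.proj i : EuclideanSpace ℝ (Fin d) →L[ℝ] ℝ).continuous).comp_continuousOn hcomp)
      · exact ContinuousOn.smul
          (((EuclideanSpace.proj j : EuclideanSpace ℝ (Fin d) →L[ℝ] ℝ).continuous).comp_continuousOn hcomp)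
          continuousOn_const
    -- complex differentiability on S
    have hfd : DifferentiableOn ℂ f S := by
      intro z hz
      have hxz : ι z ∈ Ω := hz
      set D := fderiv ℝ φ (ι z) with hD
      have hDf : HasFDerivAt φ D (ι z) := (hφdiff _ hxz).hasFDerivAt
      have hιD : HasFDerivAt ι L z := L.hasFDerivAt.const_add x₀
      have hcmp : HasFDerivAt (fun w => φ (ι w)) (D.comp L) z := hDf.comp z hιD
      set Pi' : ℂ →L[ℝ] ℝ := (EuclideanSpace.proj i : EuclideanSpace ℝ (Fin d) →L[ℝ] ℝ).comp (D.comp L) with hPi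
      set Pj' : ℂ →L[ℝ] ℝ := (EuclideanSpace.proj j : EuclideanSpace ℝ (Fin d) →L[ℝ] ℝ).comp (D.comp L) with hPj
      have hi : HasFDerivAt (fun w => φ (ι w) i) Pi' z :=
        (EuclideanSpace.proj i : EuclideanSpace ℝ (Fin d) →L[ℝ] ℝ).hasFDerivAt.comp z hcmp
      have hj : HasFDerivAt (fun w => φ (ι w) j) Pj' z :=
        (EuclideanSpace.proj j : EuclideanSpace ℝ (Fin d) →L[ℝ] ℝ).hasFDerivAt.comp z hcmp
      have hfR : HasFDerivAt f
          (Complex.ofRealCLM.comp Pi' + Pj'.smulRight Complex.I) z := by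
        exact (Complex.ofRealCLM.hasFDerivAt.comp z hi).add (hj.smul_const Complex.I)
      set a : ℂ := ((D (EuclideanSpace.single i (1 : ℝ)) i : ℝ) : ℂ)
        + (D (EuclideanSpace.single i (1 : ℝ)) j : ℝ) • Complex.I with ha
      obtain ⟨hA, hB⟩ := hJ (ι z) hxz i j hij
      rw [← hD] at hA hB
      have hEq : (a • (1 : ℂ →L[ℂ] ℂ)).restrictScalars ℝ
          = Complex.ofRealCLM.comp Pi' + Pj'.smulRight Complex.I := by
        apply ContinuousLinearMap.ext
        intro w
        have hLw : L w = w.re • (EuclideanSpace.single i (1 : ℝ))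
            + w.im • (EuclideanSpace.single j (1 : ℝ)) := by
          simp [hL, ContinuousLinearMap.add_apply, ContinuousLinearMap.smulRight_apply]
        have hPiw : Pi' w = w.re * D (EuclideanSpace.single i (1 : ℝ)) i
            + w.im * D (EuclideanSpace.single j (1 : ℝ)) i := by
          simp [hPi, ContinuousLinearMap.comp_apply, hLw, map_add, _root_.map_smul,
            PiLp.add_apply, PiLp.smul_apply, smul_eq_mul]
        have hPjw : Pj' w = w.re * D (EuclideanSpace.single i (1 : ℝ)) j
            + w.im * D (EuclideanSpace.single j (1 : ℝ)) j := by
          simp [hPj, ContinuousLinearMap.comp_apply, hLw, map_add, _root_.map_smul,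
            PiLp.add_apply, PiLp.smul_apply, smul_eq_mul]
        have hlhs : (a • (1 : ℂ →L[ℂ] ℂ)).restrictScalars ℝ w = a * w := rfl
        rw [hlhs]
        simp only [ContinuousLinearMap.add_apply, ContinuousLinearMap.comp_apply,
          ContinuousLinearMap.smulRight_apply, Complex.ofRealCLM_apply,
          hPiw, hPjw, ha]
        apply Complex.ext <;>
          simp only [Complex.add_re, Complex.add_im, Complex.mul_re, Complex.mul_im,
            Complex.real_smul, Complex.ofReal_re, Complex.ofReal_im,
            Complex.I_re, Complex.I_im, hA, hB] <;> ring
      have : HasFDerivAt f (a • (1 : ℂ →L[ℂ] ℂ)) z :=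
        hasFDerivAt_of_restrictScalars ℝ hfR hEq
      exact this.differentiableAt.differentiableWithinAt
    -- boundary values
    have hfr : ∀ w ∈ frontier S, ‖f w‖ ≤ 0 := by
      intro w hw
      have hw' : w ∈ closure S \ S := by rwa [← hSopen.frontier_eq]
      have h1 : ι w ∈ closure Ω := hclS hw'.1
      have h2 : ι w ∉ Ω := hw'.2
      have h3 : ι w ∈ frontier Ω := by rw [hΩopen.frontier_eq]; exact ⟨h1, h2⟩
      have h4 : φ (ι w) = 0 := hbdry _ h3
      simp [hf, h4]
    have hle := Complex.norm_le_of_forall_mem_frontier_norm_le hSbdd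
      ⟨hfd, hfc⟩ hfr (subset_closure h0S)
    have hf0 : f 0 = 0 := by
      have := norm_le_zero_iff.mp hle
      exact this
    have hre0 := congrArg Complex.re hf0
    simp only [hf, hι0, Complex.add_re, Complex.ofReal_re, Complex.real_smul,
      Complex.mul_re, Complex.ofReal_im, Complex.I_re, Complex.I_im,
      Complex.zero_re, mul_zero, mul_one, zero_mul, sub_zero, add_zero] at hre0
    simpa using hre0
  -- conclude
  have hcoord : ∀ i : Fin d, φ x₀ i = 0 := by
    intro i
    have h2 : 2 ≤ d := by omega
    obtain ⟨j, hj⟩ : ∃ j : Fin d, j ≠ i := by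
      by_cases h : i = ⟨0, by omega⟩
      · exact ⟨⟨1, by omega⟩, by simp [h, Fin.ext_iff]⟩
      · exact ⟨⟨0, by omega⟩, fun hc => h (hc ▸ rfl)⟩
    exact key i j (Ne.symm hj)
  ext i
  exact hcoord i
end
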